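/- If a Banach algebra A has the I-w*w property on A**, meaning that for every a'' ∈ A** the map b'' ↦ a''b'' (first Arens product) is weak-star to weak continuous, then A is Arens regular. -/

import Mathlib

set_option maxHeartbeats 1000000

open Filter Topology ContinuousLinearMap NormedSpace

namespace NormedSpace

/-- The topological dual of a seminormed space `E` (as `NormedSpace.Dual` in the older Mathlib). -/
def Dual (𝕜 : Type*) [NontriviallyNormedField 𝕜] (E : Type*) [SeminormedAddCommGroup E]
    [NormedSpace 𝕜 E] : Type _ :=
  E →L[𝕜] 𝕜

noncomputable instance (𝕜 : Type*) [NontriviallyNormedField 𝕜] (E : Type*) [SeminormedAddCommGroup E]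
    [NormedSpace 𝕜 E] : SeminormedAddCommGroup (Dual 𝕜 E) :=
  ContinuousLinearMap.toSeminormedAddCommGroup

noncomputable instance (𝕜 : Type*) [NontriviallyNormedField 𝕜] (E : Type*) [SeminormedAddCommGroup E]
    [NormedSpace 𝕜 E] : NormedSpace 𝕜 (Dual 𝕜 E) :=
  ContinuousLinearMap.toNormedSpace

instance (𝕜 : Type*) [NontriviallyNormedField 𝕜] (E : Type*) [SeminormedAddCommGroup E]
    [NormedSpace 𝕜 E] : FunLike (Dual 𝕜 E) E 𝕜 :=
  ContinuousLinearMap.funLike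

instance (𝕜 : Type*) [NontriviallyNormedField 𝕜] (E : Type*) [SeminormedAddCommGroup E]
    [NormedSpace 𝕜 E] : ContinuousLinearMapClass (Dual 𝕜 E) 𝕜 E 𝕜 :=
  ContinuousLinearMap.continuousSemilinearMapClass

end NormedSpace

noncomputable section ArensSetup

/-- The adjoint (transpose) of a continuous linear map between normed spaces. -/
def adjCLM {E F : Type*} [SeminormedAddCommGroup E] [NormedSpace ℝ E]
    [SeminormedAddCommGroup F] [NormedSpace ℝ F] (T : E →L[ℝ] F) :
    Dual ℝ F →L[ℝ] Dual ℝ E :=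
  (ContinuousLinearMap.compL ℝ E F ℝ).flip T

@[simp] theorem adjCLM_apply {E F : Type*} [SeminormedAddCommGroup E] [NormedSpace ℝ E]
    [SeminormedAddCommGroup F] [NormedSpace ℝ F] (T : E →L[ℝ] F) (g : Dual ℝ F) (x : E) :
    adjCLM T g x = g (T x) := rfl

/-- One-step Arens-type adjoint of a bounded bilinear map:
`ext1 β g' e = g' ∘ (β e)`. -/
def ext1 {E F G : Type*} [SeminormedAddCommGroup E] [NormedSpace ℝ E]
    [SeminormedAddCommGroup F] [NormedSpace ℝ F] [SeminormedAddCommGroup G] [NormedSpace ℝ G]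
    (β : E →L[ℝ] F →L[ℝ] G) : Dual ℝ G →L[ℝ] E →L[ℝ] Dual ℝ F :=
  ((ContinuousLinearMap.compL ℝ F G ℝ).flip.comp β).flip

@[simp] theorem ext1_apply {E F G : Type*} [SeminormedAddCommGroup E] [NormedSpace ℝ E]
    [SeminormedAddCommGroup F] [NormedSpace ℝ F] [SeminormedAddCommGroup G] [NormedSpace ℝ G]
    (β : E →L[ℝ] F →L[ℝ] G) (g' : Dual ℝ G) (e : E) (f : F) :
    ext1 β g' e f = g' (β e f) := rfl

/-- Triple adjoint: the (first) Arens extension of a bounded bilinear map to the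
second duals. -/
def ext3 {E F G : Type*} [SeminormedAddCommGroup E] [NormedSpace ℝ E]
    [SeminormedAddCommGroup F] [NormedSpace ℝ F] [SeminormedAddCommGroup G] [NormedSpace ℝ G]
    (β : E →L[ℝ] F →L[ℝ] G) :
    Dual ℝ (Dual ℝ E) →L[ℝ] Dual ℝ (Dual ℝ F) →L[ℝ] Dual ℝ (Dual ℝ G) :=
  ext1 (ext1 (ext1 β))

variable (A : Type*) [NonUnitalNormedRing A] [NormedSpace ℝ A]
  [SMulCommClass ℝ A A] [IsScalarTower ℝ A A] [CompleteSpace A]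

/-- The first (left) Arens product on `A**`: `⟨a''b'', a'⟩ = ⟨a'', b''a'⟩`. -/
def fArens : Dual ℝ (Dual ℝ A) →L[ℝ] Dual ℝ (Dual ℝ A) →L[ℝ] Dual ℝ (Dual ℝ A) :=
  ext3 (ContinuousLinearMap.mul ℝ A)

/-- The second (right) Arens product on `A**`: `⟨a''∘b'', a'⟩ = ⟨b'', a'∘a''⟩`. -/
def sArens : Dual ℝ (Dual ℝ A) →L[ℝ] Dual ℝ (Dual ℝ A) →L[ℝ] Dual ℝ (Dual ℝ A) :=
  (ext3 (ContinuousLinearMap.mul ℝ A).flip).flip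

/-- `A` is Arens regular when the two Arens products on `A**` coincide. -/
def ArensRegular : Prop := fArens A = sArens A

variable {A}

/-- Weak-star to weak continuity for a map from the dual of `E` into `F`. -/
def WStarToWCont {E F : Type*} [SeminormedAddCommGroup E] [NormedSpace ℝ E]
    [SeminormedAddCommGroup F] [NormedSpace ℝ F] (f : Dual ℝ E → F) : Prop :=
  Continuous fun x : WeakDual ℝ E => toWeakSpace ℝ F (f (WeakDual.toStrongDual x))

variable (A)

/-- The second adjoint `T'' : A** → A**` of `T : A → A`. -/
def secondAdj (T : A →L[ℝ] A) : Dual ℝ (Dual ℝ A) →L[ℝ] Dual ℝ (Dual ℝ A) :=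
  adjCLM (adjCLM T)

/-- Left action of `A` on `A*`: `⟨a·a', b⟩ = ⟨a', ba⟩`. -/
def dualLeft : A →L[ℝ] Dual ℝ A →L[ℝ] Dual ℝ A :=
  (ext1 (ContinuousLinearMap.mul ℝ A).flip).flip

/-- Right action of `A` on `A*`: `⟨a'·a, b⟩ = ⟨a', ab⟩`. -/
def dualRight : Dual ℝ A →L[ℝ] A →L[ℝ] Dual ℝ A :=
  ext1 (ContinuousLinearMap.mul ℝ A)

/-- Left action of `A**` (first Arens product) on `A***`. -/
def dualLeft2 : Dual ℝ (Dual ℝ A) →L[ℝ] Dual ℝ (Dual ℝ (Dual ℝ A)) →L[ℝ]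
    Dual ℝ (Dual ℝ (Dual ℝ A)) :=
  (ext1 (fArens A).flip).flip

/-- Right action of `A**` (first Arens product) on `A***`. -/
def dualRight2 : Dual ℝ (Dual ℝ (Dual ℝ A)) →L[ℝ] Dual ℝ (Dual ℝ A) →L[ℝ]
    Dual ℝ (Dual ℝ (Dual ℝ A)) :=
  ext1 (fArens A)

end ArensSetup

section BimoduleSetup

set_option maxHeartbeats 1000000

open Filter Topology ContinuousLinearMap NormedSpace

/-- A Banach `A`-bimodule: bounded bilinear left and right actions satisfying the
usual compatibility axioms. -/
structure BanachBimodule (A X : Type*) [NonUnitalNormedRing A] [NormedSpace ℝ A]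
    [SMulCommClass ℝ A A] [IsScalarTower ℝ A A]
    [NormedAddCommGroup X] [NormedSpace ℝ X] [CompleteSpace X] where
  l : A →L[ℝ] X →L[ℝ] X
  r : X →L[ℝ] A →L[ℝ] X
  l_mul : ∀ a b x, l (a * b) x = l a (l b x)
  r_mul : ∀ x a b, r (r x a) b = r x (a * b)
  l_r : ∀ a x b, l a (r x b) = r (l a x) b

variable {A X : Type*} [NonUnitalNormedRing A] [NormedSpace ℝ A]
  [SMulCommClass ℝ A A] [IsScalarTower ℝ A A] [CompleteSpace A]
  [NormedAddCommGroup X] [NormedSpace ℝ X] [CompleteSpace X]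

/-- Left action of `A` on `X*`: `⟨a·f, x⟩ = ⟨f, x·a⟩`. -/
noncomputable def modDualLeft (M : BanachBimodule A X) : A →L[ℝ] Dual ℝ X →L[ℝ] Dual ℝ X :=
  (ext1 M.r.flip).flip

/-- Right action of `A` on `X*`: `⟨f·a, x⟩ = ⟨f, a·x⟩`. -/
noncomputable def modDualRight (M : BanachBimodule A X) : Dual ℝ X →L[ℝ] A →L[ℝ] Dual ℝ X :=
  ext1 M.l

/-- Left action of `A**` on `X**` (first Arens extension). -/
noncomputable def modL2 (M : BanachBimodule A X) :
    Dual ℝ (Dual ℝ A) →L[ℝ] Dual ℝ (Dual ℝ X) →L[ℝ] Dual ℝ (Dual ℝ X) :=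
  ext3 M.l

/-- Right action of `A**` on `X**` (first Arens extension); `modR2 M x'' a'' = x''a''`. -/
noncomputable def modR2 (M : BanachBimodule A X) :
    Dual ℝ (Dual ℝ X) →L[ℝ] Dual ℝ (Dual ℝ A) →L[ℝ] Dual ℝ (Dual ℝ X) :=
  ext3 M.r

/-- Left action of `A**` on `X***`: `⟨a''·x''', x''⟩ = ⟨x''', x''a''⟩`. -/
noncomputable def modL3 (M : BanachBimodule A X) :
    Dual ℝ (Dual ℝ A) →L[ℝ] Dual ℝ (Dual ℝ (Dual ℝ X)) →L[ℝ] Dual ℝ (Dual ℝ (Dual ℝ X)) :=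
  (ext1 (modR2 M).flip).flip

/-- Right action of `A**` on `X***`: `⟨x'''·a'', x''⟩ = ⟨x''', a''x''⟩`. -/
noncomputable def modR3 (M : BanachBimodule A X) :
    Dual ℝ (Dual ℝ (Dual ℝ X)) →L[ℝ] Dual ℝ (Dual ℝ A) →L[ℝ] Dual ℝ (Dual ℝ (Dual ℝ X)) :=
  ext1 (modL2 M)

end BimoduleSetup

section DerivationSetup

variable {B Y : Type*} [SeminormedAddCommGroup B] [NormedSpace ℝ B]
  [SeminormedAddCommGroup Y] [NormedSpace ℝ Y]

/-- `D` is a derivation with respect to the multiplication `m` and the module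
actions `l`, `r`. -/
def IsDeriv (m : B →L[ℝ] B →L[ℝ] B) (l : B →L[ℝ] Y →L[ℝ] Y)
    (r : Y →L[ℝ] B →L[ℝ] Y) (D : B →L[ℝ] Y) : Prop :=
  ∀ a b, D (m a b) = l a (D b) + r (D a) b

/-- `D` is an inner derivation: `D a = a·y − y·a` for some fixed `y`. -/
def IsInner (l : B →L[ℝ] Y →L[ℝ] Y) (r : Y →L[ℝ] B →L[ℝ] Y) (D : B →L[ℝ] Y) : Prop :=
  ∃ y, ∀ a, D a = l a y - r y a

/-- `D` is a `T-S`-derivation: `D(ab) = T(a)·D(b) + D(a)·S(b)`. -/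
def IsTSDeriv (m : B →L[ℝ] B →L[ℝ] B) (l : B →L[ℝ] Y →L[ℝ] Y)
    (r : Y →L[ℝ] B →L[ℝ] Y) (T S : B →L[ℝ] B) (D : B →L[ℝ] Y) : Prop :=
  ∀ a b, D (m a b) = l (T a) (D b) + r (D a) (S b)

/-- `D` is an inner `T-S`-derivation: `D a = T(a)·y − y·S(a)` for some fixed `y`. -/
def IsTSInner (l : B →L[ℝ] Y →L[ℝ] Y) (r : Y →L[ℝ] B →L[ℝ] Y)
    (T S : B →L[ℝ] B) (D : B →L[ℝ] Y) : Prop :=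
  ∃ y, ∀ a, D a = l (T a) y - r y (S a)

end DerivationSetup


section Statements
set_option maxHeartbeats 1000000
open Filter Topology ContinuousLinearMap NormedSpace

variable {A : Type*} [NonUnitalNormedRing A] [NormedSpace ℝ A]
  [SMulCommClass ℝ A A] [IsScalarTower ℝ A A] [CompleteSpace A]


lemma weakStar_vanish {E : Type*} [NormedAddCommGroup E] [NormedSpace ℝ E]
    (g : Dual ℝ (Dual ℝ E) →ₗ[ℝ] ℝ)
    (hg : Continuous fun x : WeakDual ℝ (Dual ℝ E) => g x)
    (h0 : ∀ a : E, g (inclusionInDoubleDual ℝ E a) = 0) :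
    ∀ x : Dual ℝ (Dual ℝ E), g x = 0 := by
  set B := topDualPairing ℝ (Dual ℝ E) with hB
  have hWS := B.weakBilin_withSeminorms
  have : Nonempty (Dual ℝ E) := ⟨0⟩
  set q : Seminorm ℝ (WeakBilin B) := (normSeminorm ℝ ℝ).comp g with hq
  have hqc : Continuous ⇑q := hg.norm
  obtain ⟨s, C, hC, hle⟩ := Seminorm.bound_of_continuous hWS q hqc
  have key : ∀ x : Dual ℝ (Dual ℝ E), (∀ e ∈ s, x e = 0) → g x = 0 := by
    intro x hx
    have h1 : q x ≤ C • (s.sup B.toSeminormFamily) x := hle x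
    have h2 : (s.sup B.toSeminormFamily) x = 0 := by
      refine le_antisymm ?_ (apply_nonneg _ _)
      refine Seminorm.finset_sup_apply_le le_rfl (fun i hi => ?_)
      show ‖B x i‖ ≤ 0
      simp [hB, topDualPairing_apply, hx i hi]
      exact hx i hi
    have : q x ≤ 0 := by rw [h2] at h1; simpa using h1
    have : ‖g x‖ ≤ 0 := this
    simpa using le_antisymm this (norm_nonneg _)
  let L : ↥s → (Dual ℝ (Dual ℝ E) →ₗ[ℝ] ℝ) := fun e => B.flip ↑e
  have hker : ⨅ i, LinearMap.ker (L i) ≤ LinearMap.ker g := by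
    intro x hx
    rw [LinearMap.mem_ker]
    refine key x (fun e he => ?_)
    have := (Submodule.mem_iInf _).mp hx ⟨e, he⟩
    exact this
  obtain ⟨c, hc⟩ := (Submodule.mem_span_range_iff_exists_fun ℝ).mp (mem_span_of_iInf_ker_le_ker hker)
  set a' : Dual ℝ E := ∑ i : ↥s, c i • (i : Dual ℝ E) with ha'
  have hrep : ∀ x : Dual ℝ (Dual ℝ E), g x = x a' := by
    intro x
    rw [← hc, ha']
    simp [L, topDualPairing_apply, map_sum]
    rfl
  have ha0 : a' = 0 := by
    refine ContinuousLinearMap.ext fun a => ?_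
    have := h0 a
    have := (hrep (inclusionInDoubleDual ℝ E a)).symm.trans this
    exact this
  intro x
  rw [hrep, ha0, map_zero]

/-- If `A**` has the `I-w*w` property, then `A` is Arens regular. -/
theorem arensRegular_of_Iwsw
    (hw : ∀ a'' : Dual ℝ (Dual ℝ A), WStarToWCont (fun b'' => fArens A a'' b'')) :
    ArensRegular A := by
  have main : ∀ (a'' b'' : Dual ℝ (Dual ℝ A)) (a' : Dual ℝ A),
      fArens A a'' b'' a' = sArens A a'' b'' a' := by
    intro a'' b'' a'
    set ψ : Dual ℝ A := ext1 (ext1 (ContinuousLinearMap.mul ℝ A).flip) a'' a' with hψ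
    have hs : ∀ x : Dual ℝ (Dual ℝ A), sArens A a'' x a' = x ψ := fun x => rfl
    let g : Dual ℝ (Dual ℝ A) →ₗ[ℝ] ℝ :=
    { toFun := fun x => fArens A a'' x a' - sArens A a'' x a'
      map_add' := by intro x y; simp [map_add, ContinuousLinearMap.add_apply]; have hadd : ∀ u v : Dual ℝ (Dual ℝ A), (u + v) a' = u a' + v a' := fun _ _ => rfl; simp only [hadd]; ring
      map_smul' := by intro c x; simp [map_smul, ContinuousLinearMap.smul_apply]; have hsm : ∀ u : Dual ℝ (Dual ℝ A), (c • u) a' = c * u a' := fun _ => rfl; simp only [hsm]; ring }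
    have hcont : Continuous fun x : WeakDual ℝ (Dual ℝ A) => g x := by
      have h1 : Continuous fun x : WeakDual ℝ (Dual ℝ A) => fArens A a'' x a' := by
        have hcomp := (WeakBilin.eval_continuous
          (topDualPairing ℝ (Dual ℝ (Dual ℝ A))).flip
          (inclusionInDoubleDual ℝ (Dual ℝ A) a')).comp (hw a'')
        exact hcomp
      have h2 : Continuous fun x : WeakDual ℝ (Dual ℝ A) => sArens A a'' x a' :=
        WeakBilin.eval_continuous (topDualPairing ℝ (Dual ℝ A)) ψ
      exact h1.sub h2
    have h0 : ∀ b : A, g (inclusionInDoubleDual ℝ A b) = 0 := by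
      intro b
      have : fArens A a'' (inclusionInDoubleDual ℝ A b) a'
          = sArens A a'' (inclusionInDoubleDual ℝ A b) a' := by
        show a'' _ = _
        refine Eq.trans ?_ (hs _).symm
        exact congrArg a'' (ContinuousLinearMap.ext fun a => rfl)
      simp [g, this]
    have := weakStar_vanish g hcont h0 b''
    have hgb : fArens A a'' b'' a' - sArens A a'' b'' a' = 0 := this
    linarith
  refine ContinuousLinearMap.ext fun a'' => ContinuousLinearMap.ext fun b'' =>
    ContinuousLinearMap.ext fun a' => main a'' b'' a'


end Statements
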